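/- (Overlap of purification derivatives.) Let ψ(φ) = (S(φ) ⊗ I) Γ be the canonical purification of ρ(φ), where S(φ) = U(φ)(e^{−G/2}/√Z)U(φ)† and Γ_{(k,ℓ)} = δ_{kℓ}. Then for all i, j ∈ {1,…,J}, the partial derivatives ∂_iψ(φ) = i([S(φ), B_i] ⊗ I)Γ satisfy ⟨∂_i ψ(φ), ∂_j ψ(φ)⟩ = Tr[{A_i, A_j} ρ] − 2 · Tr[A_i √ρ A_j √ρ], where √ρ = e^{−G/2}/√Z, A_j = U_{R_j}† H_j U_{R_j}, B_j = U_{L_{j+1}} H_j U_{L_{j+1}}†, {X,Y} = XY + YX, and ⟨·,·⟩ is the standard inner product on pair-indexed complex vectors (conjugate-linear in the first argument). -/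

import Mathlib

open Matrix

noncomputable section

attribute [local instance] Matrix.linftyOpNormedAddCommGroup Matrix.linftyOpNormedSpace

/-- Square complex matrices of size `d`. -/
abbrev Mat (d : ℕ) := Matrix (Fin d) (Fin d) ℂ

/-- Descending product `f (a + n - 1) * ⋯ * f (a + 1) * f a` (empty product is `1`). -/
def descProd {d : ℕ} (f : ℕ → Mat d) (a : ℕ) : ℕ → Mat d
  | 0 => 1
  | n + 1 => f (a + n) * descProd f a n

/-- The `j`-th layer `U_j(φ_j) = exp (−i φ_j H_j) V_j`. -/
def layer {d : ℕ} (H V : ℕ → Mat d) (φ : ℕ → ℝ) (j : ℕ) : Mat d :=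
  NormedSpace.exp ((-(Complex.I * (φ j : ℂ))) • H j) * V j

/-- `U_{R_j} = U_j ⋯ U_1`. -/
def UR {d : ℕ} (H V : ℕ → Mat d) (φ : ℕ → ℝ) (j : ℕ) : Mat d :=
  descProd (layer H V φ) 1 j

/-- `U_{L_j} = U_J ⋯ U_j`. -/
def UL {d : ℕ} (H V : ℕ → Mat d) (φ : ℕ → ℝ) (J j : ℕ) : Mat d :=
  descProd (layer H V φ) j (J + 1 - j)

/-- The full layered circuit `U(φ) = U_J ⋯ U_1`. -/
def Ufull {d : ℕ} (H V : ℕ → Mat d) (φ : ℕ → ℝ) (J : ℕ) : Mat d :=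
  UR H V φ J

/-- `B_j = U_{L_{j+1}} H_j U_{L_{j+1}}†`. -/
def Bmat {d : ℕ} (H V : ℕ → Mat d) (φ : ℕ → ℝ) (J j : ℕ) : Mat d :=
  UL H V φ J (j + 1) * H j * (UL H V φ J (j + 1))ᴴ

/-- `A_j = U_{R_j}† H_j U_{R_j}`. -/
def Amat {d : ℕ} (H V : ℕ → Mat d) (φ : ℕ → ℝ) (j : ℕ) : Mat d :=
  (UR H V φ j)ᴴ * H j * UR H V φ j

/-- The thermal state `ρ = e^{−G}/Z`. -/
def thermal {d : ℕ} (G : Mat d) (Z : ℝ) : Mat d :=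
  (Z : ℂ)⁻¹ • NormedSpace.exp (-G)

/-- The parameterized state `ρ(φ) = U(φ) ρ U(φ)†`. -/
def rhoFun {d : ℕ} (H V : ℕ → Mat d) (J : ℕ) (G : Mat d) (Z : ℝ) (φ : ℕ → ℝ) : Mat d :=
  Ufull H V φ J * thermal G Z * (Ufull H V φ J)ᴴ

/-- The sesquilinear form `⟨u| M |v⟩`, conjugate-linear in `u`. -/
def braket {d : ℕ} (u : Fin d → ℂ) (M : Mat d) (v : Fin d → ℂ) : ℂ :=
  star u ⬝ᵥ M.mulVec v

open scoped Kronecker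

/-- `√ρ = e^{−G/2}/√Z`, the square root of the thermal state. -/
def sqrtThermal {d : ℕ} (G : Mat d) (Z : ℝ) : Mat d :=
  ((Real.sqrt Z : ℂ))⁻¹ • NormedSpace.exp ((-(2⁻¹ : ℂ)) • G)

/-- `S(φ) = U(φ) (e^{−G/2}/√Z) U(φ)†`, the square root of `ρ(φ)`. -/
def sqrtRhoFun {d : ℕ} (H V : ℕ → Mat d) (J : ℕ) (G : Mat d) (Z : ℝ) (φ : ℕ → ℝ) : Mat d :=
  Ufull H V φ J * sqrtThermal G Z * (Ufull H V φ J)ᴴ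

/-- The (unnormalized) maximally entangled vector `Γ_{(k,ℓ)} = δ_{kℓ}`. -/
def GammaVec (d : ℕ) : Fin d × Fin d → ℂ :=
  fun p => if p.1 = p.2 then 1 else 0

/-- The partial derivative `∂_j ψ(φ) = i ([S(φ), B_j] ⊗ I) Γ` of the canonical purification. -/
def purificationDeriv {d : ℕ} (H V : ℕ → Mat d) (J : ℕ) (G : Mat d) (Z : ℝ) (φ : ℕ → ℝ)
    (j : ℕ) : Fin d × Fin d → ℂ :=
  Complex.I •
    (((sqrtRhoFun H V J G Z φ * Bmat H V φ J j -
        Bmat H V φ J j * sqrtRhoFun H V J G Z φ) ⊗ₖ (1 : Mat d)).mulVec (GammaVec d))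


section Helpers

variable {d : ℕ}

lemma descProd_add (f : ℕ → Mat d) (a m n : ℕ) :
    descProd f a (m + n) = descProd f (a + m) n * descProd f a m := by
  induction n with
  | zero => simp [descProd]
  | succ n ih =>
      show f (a + (m + n)) * descProd f a (m + n) =
        (f (a + m + n) * descProd f (a + m) n) * descProd f a m
      rw [ih, ← Nat.add_assoc, mul_assoc]

lemma descProd_unitary (f : ℕ → Mat d) (hf : ∀ k, f k ∈ Matrix.unitaryGroup (Fin d) ℂ)
    (a n : ℕ) : descProd f a n ∈ Matrix.unitaryGroup (Fin d) ℂ := by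
  induction n with
  | zero => exact one_mem _
  | succ n ih => exact mul_mem (hf _) ih

lemma exp_skew_unitary (c : ℂ) (hc : star c = -c) (A : Mat d) (hA : A.IsHermitian) :
    NormedSpace.exp (c • A) ∈ Matrix.unitaryGroup (Fin d) ℂ := by
  rw [Matrix.mem_unitaryGroup_iff]
  have hstar : star (NormedSpace.exp (c • A)) = NormedSpace.exp (-(c • A)) := by
    rw [Matrix.star_eq_conjTranspose, ← Matrix.exp_conjTranspose]
    congr 1
    rw [Matrix.conjTranspose_smul, hA.eq, hc, neg_smul]
  rw [hstar, ← Matrix.exp_add_of_commute (c • A) (-(c • A)) (Commute.refl _).neg_right,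
    add_neg_cancel, NormedSpace.exp_zero]

lemma layer_unitary (H V : ℕ → Mat d) (hH : ∀ k, (H k).IsHermitian)
    (hV : ∀ k, V k ∈ Matrix.unitaryGroup (Fin d) ℂ) (φ : ℕ → ℝ) (k : ℕ) :
    layer H V φ k ∈ Matrix.unitaryGroup (Fin d) ℂ := by
  refine mul_mem (exp_skew_unitary _ ?_ _ (hH k)) (hV k)
  simp [Complex.conj_I]

lemma UR_unitary (H V : ℕ → Mat d) (hH : ∀ k, (H k).IsHermitian)
    (hV : ∀ k, V k ∈ Matrix.unitaryGroup (Fin d) ℂ) (φ : ℕ → ℝ) (k : ℕ) :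
    UR H V φ k ∈ Matrix.unitaryGroup (Fin d) ℂ :=
  descProd_unitary _ (layer_unitary H V hH hV φ) _ _

lemma Ufull_split (H V : ℕ → Mat d) (φ : ℕ → ℝ) {J k : ℕ} (hk : k ≤ J) :
    Ufull H V φ J = UL H V φ J (k + 1) * UR H V φ k := by
  unfold Ufull UR UL
  have h2 : J + 1 - (k + 1) = J - k := by omega
  rw [h2]
  have h := descProd_add (layer H V φ) 1 k (J - k)
  rw [show k + (J - k) = J by omega, show 1 + k = k + 1 by omega] at h
  exact h

lemma trace_conj_mul (U X Y : Mat d) (h : Uᴴ * U = 1) :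
    ((U * X * Uᴴ) * (U * Y * Uᴴ)).trace = (X * Y).trace := by
  have e : (U * X * Uᴴ) * (U * Y * Uᴴ) = U * (X * (Uᴴ * U) * Y) * Uᴴ := by noncomm_ring
  rw [e, h, mul_one, Matrix.trace_mul_cycle, ← mul_assoc, h, one_mul]

lemma conj_sub_conj (U t A : Mat d) (h : Uᴴ * U = 1) :
    (U * t * Uᴴ) * (U * A * Uᴴ) - (U * A * Uᴴ) * (U * t * Uᴴ) = U * (t * A - A * t) * Uᴴ := by
  have e1 : (U * t * Uᴴ) * (U * A * Uᴴ) = U * (t * (Uᴴ * U) * A) * Uᴴ := by noncomm_ring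
  have e2 : (U * A * Uᴴ) * (U * t * Uᴴ) = U * (A * (Uᴴ * U) * t) * Uᴴ := by noncomm_ring
  rw [e1, e2, h]
  noncomm_ring

lemma kron_mulVec_Gamma (M : Mat d) :
    ((M ⊗ₖ (1 : Mat d)).mulVec (GammaVec d)) = fun p => M p.1 p.2 := by
  funext p
  simp [Matrix.mulVec, dotProduct, GammaVec, Matrix.one_apply, Fintype.sum_prod_type,
    mul_ite, ite_and, Finset.sum_ite_eq, Finset.sum_ite_eq']

lemma overlap_general (M N : Mat d) :
    star (Complex.I • ((M ⊗ₖ (1 : Mat d)).mulVec (GammaVec d))) ⬝ᵥ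
      (Complex.I • ((N ⊗ₖ (1 : Mat d)).mulVec (GammaVec d))) = (Mᴴ * N).trace := by
  rw [kron_mulVec_Gamma, kron_mulVec_Gamma, star_smul, smul_dotProduct,
    dotProduct_smul]
  have hI : (star Complex.I) • Complex.I •
      ((star (fun p : Fin d × Fin d => M p.1 p.2)) ⬝ᵥ (fun p => N p.1 p.2)) =
      (star (fun p : Fin d × Fin d => M p.1 p.2)) ⬝ᵥ (fun p => N p.1 p.2) := by
    rw [smul_smul]
    simp [Complex.star_def, Complex.conj_I]
  rw [hI]
  simp only [dotProduct, Pi.star_apply, Matrix.trace, Matrix.diag, Matrix.mul_apply,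
    Matrix.conjTranspose_apply]
  rw [Fintype.sum_prod_type]
  exact Finset.sum_comm

lemma sqrtThermal_herm {G : Mat d} (hG : G.IsHermitian) (Z : ℝ) :
    (sqrtThermal G Z).IsHermitian := by
  unfold sqrtThermal
  rw [Matrix.IsHermitian, Matrix.conjTranspose_smul, ← Matrix.exp_conjTranspose,
    Matrix.conjTranspose_smul, hG.eq]
  norm_num

lemma sqrtThermal_sq {G : Mat d} (Z : ℝ) (hZpos : 0 < Z) :
    sqrtThermal G Z * sqrtThermal G Z = thermal G Z := by
  unfold sqrtThermal thermal
  rw [smul_mul_smul_comm, ← Matrix.exp_add_of_commute _ _ (Commute.refl _)]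
  congr 1
  · rw [← mul_inv, ← Complex.ofReal_mul, Real.mul_self_sqrt hZpos.le]
  · rw [← add_smul]
    norm_num

lemma Amat_herm (H V : ℕ → Mat d) (hH : ∀ k, (H k).IsHermitian) (φ : ℕ → ℝ) (k : ℕ) :
    (Amat H V φ k).IsHermitian := by
  unfold Amat
  rw [Matrix.IsHermitian, Matrix.conjTranspose_mul, Matrix.conjTranspose_mul,
    Matrix.conjTranspose_conjTranspose, (hH k).eq, mul_assoc]

end Helpers

/-- Overlap of purification derivatives:
`⟨∂_i ψ(φ), ∂_j ψ(φ)⟩ = Tr[{A_i, A_j} ρ] − 2 Tr[A_i √ρ A_j √ρ]`. -/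
theorem purification_deriv_overlap {d J : ℕ} (hd : 1 ≤ d)
    (H V G : _) (hH : ∀ j, (H j : Mat d).IsHermitian)
    (hV : ∀ j, V j ∈ Matrix.unitaryGroup (Fin d) ℂ)
    (hG : (G : Mat d).IsHermitian)
    (Z : ℝ) (hZpos : 0 < Z) (hZ : (NormedSpace.exp (-G)).trace = (Z : ℂ))
    (φ : ℕ → ℝ) (i j : ℕ) (hi1 : 1 ≤ i) (hiJ : i ≤ J) (hj1 : 1 ≤ j) (hjJ : j ≤ J) :
    star (purificationDeriv H V J G Z φ i) ⬝ᵥ purificationDeriv H V J G Z φ j =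
      ((Amat H V φ i * Amat H V φ j + Amat H V φ j * Amat H V φ i) * thermal G Z).trace -
        2 * (Amat H V φ i * sqrtThermal G Z * Amat H V φ j * sqrtThermal G Z).trace := by
  have hU : Ufull H V φ J ∈ Matrix.unitaryGroup (Fin d) ℂ :=
    UR_unitary H V hH hV φ J
  have hUU : (Ufull H V φ J)ᴴ * Ufull H V φ J = 1 := by
    simpa [Matrix.star_eq_conjTranspose] using
      (Matrix.mem_unitaryGroup_iff'.mp hU)
  set U := Ufull H V φ J with hUdef
  set t := sqrtThermal G Z with htdef
  set Ai := Amat H V φ i with hAidef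
  set Aj := Amat H V φ j with hAjdef
  have hB : ∀ k, k ≤ J → Bmat H V φ J k = U * Amat H V φ k * Uᴴ := by
    intro k hk
    have hRk : UR H V φ k * (UR H V φ k)ᴴ = 1 := by
      simpa [Matrix.star_eq_conjTranspose] using
        (Matrix.mem_unitaryGroup_iff.mp (UR_unitary H V hH hV φ k))
    have hsplit := Ufull_split H V φ hk
    rw [hUdef, hsplit]
    unfold Bmat Amat
    rw [Matrix.conjTranspose_mul]
    have e : UL H V φ J (k + 1) * UR H V φ k *
        ((UR H V φ k)ᴴ * H k * UR H V φ k) * ((UR H V φ k)ᴴ * (UL H V φ J (k + 1))ᴴ) =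
        UL H V φ J (k + 1) * ((UR H V φ k * (UR H V φ k)ᴴ) * H k *
          (UR H V φ k * (UR H V φ k)ᴴ)) * (UL H V φ J (k + 1))ᴴ := by
      noncomm_ring
    rw [e, hRk, one_mul, mul_one]
  have hS : sqrtRhoFun H V J G Z φ = U * t * Uᴴ := rfl
  have hCi : sqrtRhoFun H V J G Z φ * Bmat H V φ J i -
      Bmat H V φ J i * sqrtRhoFun H V J G Z φ = U * (t * Ai - Ai * t) * Uᴴ := by
    rw [hS, hB i hiJ, ← hAidef]
    exact conj_sub_conj U t Ai hUU
  have hCj : sqrtRhoFun H V J G Z φ * Bmat H V φ J j -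
      Bmat H V φ J j * sqrtRhoFun H V J G Z φ = U * (t * Aj - Aj * t) * Uᴴ := by
    rw [hS, hB j hjJ, ← hAjdef]
    exact conj_sub_conj U t Aj hUU
  have ht : t.IsHermitian := sqrtThermal_herm hG Z
  have hAi : Ai.IsHermitian := Amat_herm H V hH φ i
  have hAj : Aj.IsHermitian := Amat_herm H V hH φ j
  rw [purificationDeriv, purificationDeriv, hCi, hCj, overlap_general]
  have hct : (U * (t * Ai - Ai * t) * Uᴴ)ᴴ = U * (Ai * t - t * Ai) * Uᴴ := by
    rw [Matrix.conjTranspose_mul, Matrix.conjTranspose_mul,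
      Matrix.conjTranspose_conjTranspose, Matrix.conjTranspose_sub,
      Matrix.conjTranspose_mul, Matrix.conjTranspose_mul, ht.eq, hAi.eq, mul_assoc]
  rw [hct, trace_conj_mul _ _ _ hUU]
  rw [← sqrtThermal_sq Z hZpos, ← htdef]
  have e1 : (Ai * t - t * Ai) * (t * Aj - Aj * t) =
      (Ai * (t * t) * Aj + t * (Ai * Aj) * t) - (Ai * t * Aj * t + t * (Ai * t * Aj)) := by
    noncomm_ring
  rw [e1, Matrix.trace_sub, Matrix.trace_add, Matrix.trace_add]
  have c1 : (Ai * (t * t) * Aj).trace = (Aj * Ai * (t * t)).trace := by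
    rw [Matrix.trace_mul_cycle]
  have c2 : (t * (Ai * Aj) * t).trace = (Ai * Aj * (t * t)).trace := by
    rw [Matrix.trace_mul_cycle]
    exact Matrix.trace_mul_comm _ _
  have c3 : (t * (Ai * t * Aj)).trace = (Ai * t * Aj * t).trace := by
    rw [Matrix.trace_mul_comm]
  rw [c1, c2, c3, add_mul, Matrix.trace_add]
  ring
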